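/- (1) Let (Σ, O) be a scenario. An empirical model e ∈ Emp(Σ, O) lies in the image of Θ_{(Σ,O)} if and only if η_{(Σ,O)}(e) lies in the image of Θ_{f_{(Σ,O)}}; that is, e is contextual if and only if the corresponding empirical model on the bundle scenario f_{(Σ,O)} is contextual. (2) Let f: Γ → Σ be a bundle scenario. An empirical model p ∈ bEmp(f) lies in the image of Θ_f if and only if the simplicial distribution Np lies in the image of Θ_{Nf}; that is, p is contextual if and only if Np is contextual. -/

import Mathlib

universe u v w t

namespace Ctx

/-- An abstract simplicial complex on the vertex type `V`: a collection of
nonempty finite subsets of `V` (the simplices/faces), closed under passing to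
nonempty subsets, and containing every singleton (so that `V` is exactly the
vertex set). -/
structure SComplex (V : Type u) where
  faces : Set (Set V)
  finite_mem : ∀ σ ∈ faces, Set.Finite σ
  nonempty_mem : ∀ σ ∈ faces, Set.Nonempty σ
  down_closed : ∀ ⦃σ⦄, σ ∈ faces → ∀ ⦃τ⦄, τ ⊆ σ → τ.Nonempty → τ ∈ faces
  singleton_mem : ∀ x : V, {x} ∈ faces

namespace SComplex

variable {V : Type u} {W : Type v} {V' : Type w} {V'' : Type t}

/-- A map of simplicial complexes: a function on vertices carrying every
simplex (elementwise image) to a simplex. -/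
@[ext]
structure Map (Γ : SComplex V) (K : SComplex W) where
  toFun : V → W
  map_faces : ∀ ⦃σ⦄, σ ∈ Γ.faces → toFun '' σ ∈ K.faces

variable {Γ : SComplex V} {K : SComplex W} {K' : SComplex V'}

/-- The identity simplicial complex map. -/
protected def Map.id (K : SComplex V) : Map K K :=
  ⟨fun x => x, fun σ h => by simpa using h⟩

/-- Composition of simplicial complex maps. -/
def Map.comp {L : SComplex V'} (g : Map K L) (f : Map Γ K) : Map Γ L :=
  ⟨g.toFun ∘ f.toFun, fun σ h => by
    rw [Set.image_comp]; exact g.map_faces (f.map_faces h)⟩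

/-- The star of a simplex: all simplices containing it. -/
def star (K : SComplex V) (σ : Set V) : Set (Set V) := {τ | τ ∈ K.faces ∧ σ ⊆ τ}

/-- Surjectivity: every simplex of the target is an image of a simplex. -/
def Map.Surj (f : Map Γ K) : Prop := ∀ σ ∈ K.faces, ∃ γ ∈ Γ.faces, f.toFun '' γ = σ

/-- Local surjectivity: stars surject onto stars. -/
def Map.LocSurj (f : Map Γ K) : Prop :=
  ∀ γ ∈ Γ.faces, ∀ τ ∈ K.star (f.toFun '' γ), ∃ γ' ∈ Γ.star γ, f.toFun '' γ' = τ

/-- Discreteness over vertices: no edge between distinct vertices with the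
same image. -/
def Map.DiscV (f : Map Γ K) : Prop :=
  ∀ x y : V, x ≠ y → f.toFun x = f.toFun y → ({x, y} : Set V) ∉ Γ.faces

/-- A bundle scenario: a surjective, locally surjective simplicial complex map
that is discrete over vertices. -/
def Map.IsBundle (f : Map Γ K) : Prop := f.Surj ∧ f.LocSurj ∧ f.DiscV

/-- `f` has the right lifting property with respect to `g`. -/
def RLP {A : Type*} {B : Type*} {CA : SComplex A} {CB : SComplex B}
    (g : Map CA CB) (f : Map Γ K) : Prop :=
  ∀ (u : Map CA Γ) (v : Map CB K), f.comp u = v.comp g →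
    ∃ h : Map CB Γ, h.comp g = u ∧ f.comp h = v

/-- The full simplicial complex `Δ^n` on `{0, …, n}`. -/
def deltaC (n : ℕ) : SComplex (Fin (n + 1)) where
  faces := {σ | σ.Nonempty}
  finite_mem := fun σ _ => σ.toFinite
  nonempty_mem := fun _ h => h
  down_closed := fun _ _ _ _ h => h
  singleton_mem := fun x => Set.singleton_nonempty x

/-- The simplicial complex map `Δ^m → Δ^n` induced by a function
`{0,…,m} → {0,…,n}`. -/
def deltaMap {m n : ℕ} (θ : Fin (m + 1) → Fin (n + 1)) : Map (deltaC m) (deltaC n) :=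
  ⟨θ, fun _ h => h.image θ⟩

/-- The empty simplicial complex. -/
def emptyC : SComplex Empty where
  faces := ∅
  finite_mem := fun _ h => h.elim
  nonempty_mem := fun _ h => h.elim
  down_closed := fun _ h => h.elim
  singleton_mem := fun x => x.elim

/-- The inclusion of the empty simplicial complex into `Δ^n`. -/
def emptyToDelta (n : ℕ) : Map emptyC (deltaC n) :=
  ⟨fun x => x.elim, fun _ h => h.elim⟩

/-- The type of faces of a simplicial complex. -/
abbrev Face (K : SComplex V) : Type u := {σ : Set V // σ ∈ K.faces}

/-- The nerve complex `ĤN K`: vertices are the simplices of `K`, and a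
nonempty finite set of simplices is a face iff its union is a face of `K`. -/
def nerveC (K : SComplex V) : SComplex K.Face where
  faces := {τ | τ.Finite ∧ τ.Nonempty ∧ (⋃ σ ∈ τ, (σ : Set V)) ∈ K.faces}
  finite_mem := fun _ h => h.1
  nonempty_mem := fun _ h => h.2.1
  down_closed := by
    intro τ h τ' hsub hne
    refine ⟨h.1.subset hsub, hne, K.down_closed h.2.2 ?_ ?_⟩
    · exact Set.biUnion_subset_biUnion_left hsub
    · obtain ⟨σ, hσ⟩ := hne
      obtain ⟨x, hx⟩ := K.nonempty_mem σ.1 σ.2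
      exact ⟨x, Set.mem_biUnion hσ hx⟩
  singleton_mem := fun σ => ⟨Set.finite_singleton σ, Set.singleton_nonempty σ, by
    simpa using σ.2⟩

/-- The map `ĤN f` induced on nerve complexes. -/
def nerveMap (f : Map Γ K) : Map (nerveC Γ) (nerveC K) where
  toFun γ := ⟨f.toFun '' γ.1, f.map_faces γ.2⟩
  map_faces := by
    intro τ hτ
    refine ⟨hτ.1.image _, hτ.2.1.image _, ?_⟩
    have h : (⋃ σ ∈ (fun γ : Γ.Face => (⟨f.toFun '' γ.1, f.map_faces γ.2⟩ : K.Face)) '' τ,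
        (σ : Set W)) = f.toFun '' (⋃ σ ∈ τ, (σ : Set V)) := by
      rw [Set.biUnion_image, Set.image_iUnion₂]
    exact Set.mem_of_eq_of_mem h (f.map_faces hτ.2.2)

/-- The unit `δ : K → ĤN K`, sending a vertex to the singleton simplex. -/
def deltaHat (K : SComplex V) : Map K (nerveC K) where
  toFun x := ⟨{x}, K.singleton_mem x⟩
  map_faces := by
    intro σ hσ
    refine ⟨(K.finite_mem σ hσ).image _, (K.nonempty_mem σ hσ).image _, ?_⟩
    have h : (⋃ τ ∈ (fun x : V => (⟨{x}, K.singleton_mem x⟩ : K.Face)) '' σ,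
        (τ : Set V)) = σ := by
      rw [Set.biUnion_image]
      exact Set.biUnion_of_singleton σ
    exact Set.mem_of_eq_of_mem h hσ

/-- The multiplication `μ : ĤN (ĤN K) → ĤN K` of the nerve complex monad,
sending a set of simplices to its union. -/
def muMap (K : SComplex V) : Map (nerveC (nerveC K)) (nerveC K) where
  toFun τ := ⟨⋃ σ ∈ τ.1, (σ : Set V), τ.2.2.2⟩
  map_faces := by
    intro T hT
    refine ⟨hT.1.image _, hT.2.1.image _, ?_⟩
    have h : (⋃ σ ∈ (fun τ : (nerveC K).Face =>
          (⟨⋃ σ ∈ τ.1, (σ : Set V), τ.2.2.2⟩ : K.Face)) '' T, (σ : Set V))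
        = ⋃ σ ∈ (⋃ τ ∈ T, (τ : Set K.Face)), (σ : Set V) := by
      rw [Set.biUnion_image]
      ext x
      simp only [Set.mem_iUnion, Set.mem_setOf_eq]
      tauto
    exact Set.mem_of_eq_of_mem h hT.2.2.2.2

/-- The vertex type of the pull-back of `f : Γ → K` along `π : K' → K`. -/
def PB {Γ : SComplex V} {K : SComplex W} {K' : SComplex V'} (f : Map Γ K) (π : Map K' K) :
    Type (max u w) :=
  {q : V × V' // f.toFun q.1 = π.toFun q.2}

/-- The pull-back of `f : Γ → K` along `π : K' → K`: vertices are pairs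
`(x, y)` with `f x = π y`, and a set of pairs is a simplex iff both coordinate
projections are simplices. -/
def pullback {Γ : SComplex V} {K : SComplex W} {K' : SComplex V'} (f : Map Γ K) (π : Map K' K) :
    SComplex (PB f π) where
  faces := {τ | ((fun q : PB f π => q.1.1) '' τ) ∈ Γ.faces ∧
    ((fun q : PB f π => q.1.2) '' τ) ∈ K'.faces}
  finite_mem := by
    intro τ h
    have h1 : (Subtype.val '' τ).Finite := by
      refine Set.Finite.subset (Set.Finite.prod (Γ.finite_mem _ h.1) (K'.finite_mem _ h.2)) ?_
      rintro q ⟨r, hr, rfl⟩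
      exact ⟨⟨r, hr, rfl⟩, ⟨r, hr, rfl⟩⟩
    exact Set.Finite.of_finite_image h1 Subtype.val_injective.injOn
  nonempty_mem := fun τ h => Set.Nonempty.of_image (Γ.nonempty_mem _ h.1)
  down_closed := fun τ h τ' hsub hne =>
    ⟨Γ.down_closed h.1 (Set.image_mono hsub) (hne.image _),
     K'.down_closed h.2 (Set.image_mono hsub) (hne.image _)⟩
  singleton_mem := fun q => by
    constructor
    · simpa using Γ.singleton_mem q.1.1
    · simpa using K'.singleton_mem q.1.2

/-- First projection of the pull-back. -/
def pbFst {Γ : SComplex V} {K : SComplex W} {K' : SComplex V'} (f : Map Γ K) (π : Map K' K) :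
    Map (pullback f π) Γ :=
  ⟨fun q => q.1.1, fun _ h => h.1⟩

/-- Second projection of the pull-back (the pulled-back bundle). -/
def pbSnd {Γ : SComplex V} {K : SComplex W} {K' : SComplex V'} (f : Map Γ K) (π : Map K' K) :
    Map (pullback f π) K' :=
  ⟨fun q => q.1.2, fun _ h => h.2⟩

/-- The event complex `E_O K` of a scenario `(K, O)`: vertices are pairs
`(x, o)` with `o ∈ O x`, and simplices are graphs of outcome assignments over
simplices of `K`. -/
def eventComplex (K : SComplex V) (O : V → Type v) : SComplex ((x : V) × O x) where
  faces := {τ | (Sigma.fst '' τ) ∈ K.faces ∧ Set.InjOn Sigma.fst τ}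
  finite_mem := fun _ h => Set.Finite.of_finite_image (K.finite_mem _ h.1) h.2
  nonempty_mem := fun _ h => Set.Nonempty.of_image (K.nonempty_mem _ h.1)
  down_closed := fun τ h τ' hsub hne =>
    ⟨K.down_closed h.1 (Set.image_mono hsub) (hne.image _), h.2.mono hsub⟩
  singleton_mem := fun p => ⟨by simpa using K.singleton_mem p.1, Set.injOn_singleton _ _⟩

/-- The canonical projection `E_O K → K` of a scenario. -/
def eventProj (K : SComplex V) (O : V → Type v) : Map (eventComplex K O) K :=
  ⟨Sigma.fst, fun _ h => h.1⟩

end SComplex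

open SComplex

/-- `R`-distributions on a set `U`: finitely supported `R`-valued functions
summing to `1`. -/
def Dist (R : Type u) [CommSemiring R] (U : Type v) : Type (max u v) :=
  {p : U →₀ R // p.sum (fun _ r => r) = 1}

/-- Push-forward of distributions along a function. -/
noncomputable def Dist.map {R : Type u} [CommSemiring R] {U : Type v} {U' : Type w} (g : U → U')
    (p : Dist R U) : Dist R U' :=
  ⟨Finsupp.mapDomain g p.1, by
    rw [Finsupp.sum_mapDomain_index (fun _ => rfl) (fun _ _ _ => rfl)]
    exact p.2⟩

/-- The Dirac distribution at a point. -/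
noncomputable def Dist.pure {R : Type u} [CommSemiring R] {U : Type v} (u : U) : Dist R U :=
  ⟨Finsupp.single u 1, by rw [Finsupp.sum_single_index rfl]⟩

namespace SComplex

/-- The fiber of a simplicial complex map over a simplex of the target. -/
abbrev Map.fiber {Γ : SComplex V} {K : SComplex W} (f : Map Γ K) (σ : Set W) : Type u :=
  {γ : Set V // γ ∈ Γ.faces ∧ f.toFun '' γ = σ}

/-- The restriction map between fibers, sending `γ` over `σ` to the
subsimplex of `γ` lying over `σ' ⊆ σ`.  (For bundle scenarios this is the
unique such subsimplex.) -/
def Map.resFiber {Γ : SComplex V} {K : SComplex W} (f : Map Γ K) {σ σ' : Set W}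
    (hσ' : σ' ∈ K.faces) (h : σ' ⊆ σ) (γ : f.fiber σ) : f.fiber σ' := by
  have hne : ({y | y ∈ γ.1 ∧ f.toFun y ∈ σ'} : Set V).Nonempty := by
    obtain ⟨x, hx⟩ := K.nonempty_mem σ' hσ'
    have hx' : x ∈ f.toFun '' γ.1 := (Set.ext_iff.mp γ.2.2 x).mpr (h hx)
    obtain ⟨y, hy, rfl⟩ := hx'
    exact ⟨y, hy, hx⟩
  refine ⟨{y | y ∈ γ.1 ∧ f.toFun y ∈ σ'},
    Γ.down_closed γ.2.1 (fun y hy => hy.1) hne, ?_⟩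
  ext x
  constructor
  · rintro ⟨y, ⟨hy, hfy⟩, rfl⟩
    exact hfy
  · intro hx
    have hx' : x ∈ f.toFun '' γ.1 := (Set.ext_iff.mp γ.2.2 x).mpr (h hx)
    obtain ⟨y, hy, rfl⟩ := hx'
    exact ⟨y, ⟨hy, hx⟩, rfl⟩

/-- An empirical model on a bundle scenario `f : Γ → K`: a compatible family
of distributions on the fibers of `f`. -/
structure EmpiricalModel (R : Type t) [CommSemiring R] {Γ : SComplex V} {K : SComplex W}
    (f : Map Γ K) where
  dist : ∀ σ, σ ∈ K.faces → Dist R (f.fiber σ)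
  compat : ∀ σ (hσ : σ ∈ K.faces) σ' (hσ' : σ' ∈ K.faces) (h : σ' ⊆ σ),
    Dist.map (f.resFiber hσ' h) (dist σ hσ) = dist σ' hσ'

/-- An empirical model on a scenario `(K, O)`: a compatible family of
distributions on joint outcome assignments over each measurement context. -/
structure ScenEmp (R : Type t) [CommSemiring R] (K : SComplex V) (O : V → Type v) where
  dist : ∀ σ, σ ∈ K.faces → Dist R (∀ x : σ, O x.1)
  compat : ∀ σ (hσ : σ ∈ K.faces) σ' (hσ' : σ' ∈ K.faces) (h : σ' ⊆ σ),
    Dist.map (fun (s : ∀ x : σ, O x.1) (x : σ') => s ⟨x.1, h x.2⟩) (dist σ hσ) = dist σ' hσ'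

end SComplex

namespace SComplex

variable {V : Type u} {W : Type v} {V' : Type w}


/-- The defining property of the push-forward `π_* p` of an empirical model
`p` on `f` along a simplicial relation `π : K' → ĤN K` (a simplicial complex
map into the nerve complex): over a simplex `σ'` of `K'`, the value at a fiber
element `γ'` of the pulled-back bundle is the value of `p` over the union
`π̄(σ')` at the union of the first components of `γ'`. -/
def piPushSpec {Γ : SComplex V} {K : SComplex W} {K' : SComplex V'}
    (f : Map Γ K) (π : Map K' (nerveC K)) {R : Type t} [CommSemiring R]
    (p : EmpiricalModel R f) (q : EmpiricalModel R (pbSnd (nerveMap f) π)) : Prop :=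
  ∀ σ' (hσ' : σ' ∈ K'.faces) (γ' : (pbSnd (nerveMap f) π).fiber σ')
    (hu : (⋃ x' ∈ σ', ((π.toFun x' : K.Face) : Set W)) ∈ K.faces)
    (γ : f.fiber (⋃ x' ∈ σ', ((π.toFun x' : K.Face) : Set W))),
    (γ : Set V) = (⋃ r ∈ γ'.1, ((r.1.1 : Γ.Face) : Set V)) →
    (q.dist σ' hσ').1 γ' = (p.dist _ hu).1 γ

/-- The fiber element of the event bundle given by the graph of an outcome
assignment `s` over a simplex `σ`. -/
def graphFiber (K : SComplex V) (O : V → Type v) {σ : Set V} (hσ : σ ∈ K.faces)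
    (s : ∀ x : σ, O x.1) : (eventProj K O).fiber σ := by
  refine ⟨{p : (x : V) × O x | ∃ h : p.1 ∈ σ, p.2 = s ⟨p.1, h⟩}, ⟨?_, ?_⟩, ?_⟩
  · have h : Sigma.fst '' {p : (x : V) × O x | ∃ h : p.1 ∈ σ, p.2 = s ⟨p.1, h⟩} = σ := by
      ext x
      constructor
      · rintro ⟨p, ⟨hp, _⟩, rfl⟩; exact hp
      · intro hx; exact ⟨⟨x, s ⟨x, hx⟩⟩, ⟨hx, rfl⟩, rfl⟩
    exact Set.mem_of_eq_of_mem h hσ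
  · rintro ⟨x₁, o₁⟩ ⟨h₁, ho₁⟩ ⟨x₂, o₂⟩ ⟨h₂, ho₂⟩ hx
    obtain rfl : x₁ = x₂ := hx
    exact congrArg (Sigma.mk x₁) (ho₁.trans ho₂.symm)
  · ext x
    constructor
    · rintro ⟨p, ⟨hp, _⟩, rfl⟩; exact hp
    · intro hx; exact ⟨⟨x, s ⟨x, hx⟩⟩, ⟨hx, rfl⟩, rfl⟩

/-- Push-forward of a fiber element along a map over the base. -/
def pushFiber {Γ : SComplex V} {Γ' : SComplex V'} {K : SComplex W}
    (f : Map Γ K) (g : Map Γ' K) (α : Map Γ Γ') (hc : g.comp α = f) (σ : Set W)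
    (γ : f.fiber σ) : g.fiber σ := by
  refine ⟨α.toFun '' γ.1, α.map_faces γ.2.1, ?_⟩
  rw [← Set.image_comp]
  have h : g.toFun ∘ α.toFun = f.toFun := congrArg Map.toFun hc
  rw [h]
  exact γ.2.2

/-- Sections of a bundle scenario. -/
def BSection {Γ : SComplex V} {K : SComplex W} (f : Map Γ K) : Type _ :=
  {s : Map K Γ // f.comp s = Map.id K}

/-- Evaluation of a section of a bundle scenario at a simplex of the base,
giving an element of the fiber. -/
def BSection.ev {Γ : SComplex V} {K : SComplex W} (f : Map Γ K) (σ : Set W)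
    (hσ : σ ∈ K.faces) (s : BSection f) : f.fiber σ := by
  refine ⟨s.1.toFun '' σ, s.1.map_faces hσ, ?_⟩
  rw [← Set.image_comp]
  have h : f.toFun ∘ s.1.toFun = fun x => x := congrArg Map.toFun s.2
  rw [h, Set.image_id']

/-- Noncontextuality of an empirical model on a bundle scenario: it is a
mixture of deterministic models coming from sections. -/
def BundleNC (R : Type t) [CommSemiring R] {Γ : SComplex V} {K : SComplex W}
    (f : Map Γ K) (p : EmpiricalModel R f) : Prop :=
  ∃ d : Dist R (BSection f), ∀ σ (hσ : σ ∈ K.faces),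
    p.dist σ hσ = Dist.map (BSection.ev f σ hσ) d

/-- Noncontextuality of an empirical model on a scenario `(K, O)`: it is a
mixture of deterministic models coming from global outcome assignments. -/
def ScenNC (R : Type t) [CommSemiring R] (K : SComplex V) (O : V → Type v)
    (e : ScenEmp R K O) : Prop :=
  ∃ d : Dist R (∀ x : V, O x), ∀ σ (hσ : σ ∈ K.faces),
    e.dist σ hσ = Dist.map (fun (g : ∀ x : V, O x) (x : σ) => g x.1) d

end SComplex

end Ctx
namespace Ctx

open CategoryTheory SComplex

/-! ### Simplicial sets: the nerve space of a simplicial complex -/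

/-- The commutative monoid of subsets of `V` under union (with unit `∅`). -/
def UM (V : Type u) : Type u := Set V

namespace UM

/-- View an element of the union monoid as a set. -/
def toSet {V : Type u} (a : UM V) : Set V := a

/-- View a set as an element of the union monoid. -/
def ofSet {V : Type u} (a : Set V) : UM V := a

end UM

instance {V : Type u} : Monoid (UM V) where
  mul a b := UM.ofSet (a.toSet ∪ b.toSet)
  one := UM.ofSet ∅
  mul_assoc a b c := Set.union_assoc _ _ _
  one_mul := Set.empty_union
  mul_one := Set.union_empty

@[simp] lemma UM.toSet_mul {V : Type u} (a b : UM V) :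
    (a * b).toSet = a.toSet ∪ b.toSet := rfl

@[simp] lemma UM.toSet_one {V : Type u} : (1 : UM V).toSet = (∅ : Set V) := rfl

/-- The nerve of the one-object category on the union monoid: the ambient
simplicial set whose `n`-simplices are `n`-tuples of subsets of `V` (recorded
as a composable sequence of arrows). -/
def B (V : Type u) : SSet.{u} := nerve (SingleObj (UM V))

/-- The total subset (the "union of the entries") of a simplex of `B V`:
the value of the corresponding functor on the morphism `0 ⟶ last`. -/
def totM {V : Type u} {Δ : SimplexCategoryᵒᵖ} (x : (B V).obj Δ) : UM V :=
  x.map (homOfLE (Fin.zero_le (Fin.last Δ.unop.len)))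

/-- The total subset of a simplex of `B V`, as a set. -/
def tot {V : Type u} {Δ : SimplexCategoryᵒᵖ} (x : (B V).obj Δ) : Set V :=
  (totM x).toSet

lemma tot_whisker_subset {V : Type u} {m n : ℕ} (g : Fin (m + 1) ⥤ Fin (n + 1))
    (x : ComposableArrows (SingleObj (UM V)) n) :
    UM.toSet ((x.whiskerLeft g).map (homOfLE (Fin.zero_le (Fin.last m))))
      ⊆ UM.toSet (x.map (homOfLE (Fin.zero_le (Fin.last n)))) := by
  intro a ha
  have comp_eq : homOfLE (Fin.zero_le (Fin.last n))
      = homOfLE (Fin.zero_le (g.obj 0)) ≫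
          (g.map (homOfLE (Fin.zero_le (Fin.last m))) ≫
            homOfLE (Fin.le_last (g.obj (Fin.last m)))) :=
    Subsingleton.elim _ _
  have e : x.map (homOfLE (Fin.zero_le (Fin.last n)))
      = x.map (homOfLE (Fin.zero_le (g.obj 0))) ≫
          (x.map (g.map (homOfLE (Fin.zero_le (Fin.last m)))) ≫
            x.map (homOfLE (Fin.le_last (g.obj (Fin.last m))))) := by
    rw [comp_eq, x.map_comp, x.map_comp]
  have ha' : a ∈ UM.toSet (x.map (g.map (homOfLE (Fin.zero_le (Fin.last m))))) := ha
  rw [e, SingleObj.comp_as_mul, SingleObj.comp_as_mul, UM.toSet_mul, UM.toSet_mul]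
  exact Or.inl (Or.inr ha')

lemma tot_map_subset {V : Type u} {Δ Δ' : SimplexCategoryᵒᵖ} (θ : Δ ⟶ Δ')
    (x : (B V).obj Δ) : tot ((B V).map θ x) ⊆ tot x :=
  tot_whisker_subset (SimplexCategory.toCat.map θ.unop).toFunctor x

/-- The nerve space `N K` of a simplicial complex `K`: the simplicial subset
of `B V` consisting of the tuples of subsets whose union is empty or a
simplex of `K`.  (Each entry is then automatically empty or a simplex.) -/
def NC {V : Type u} (K : SComplex V) : SSet.{u} where
  obj Δ := {x : (B V).obj Δ // tot x = ∅ ∨ tot x ∈ K.faces}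
  map θ := TypeCat.ofHom fun x => ⟨(B V).map θ x.1, by
    rcases x.2 with h | h
    · left
      have hsub := tot_map_subset θ x.1
      rw [h] at hsub
      exact Set.subset_empty_iff.mp hsub
    · by_cases h0 : tot ((B V).map θ x.1) = ∅
      · exact Or.inl h0
      · exact Or.inr (K.down_closed h (tot_map_subset θ x.1)
          (Set.nonempty_iff_ne_empty.mpr h0))⟩
  map_id Δ := by
    ext x
    exact types_congr_hom ((B V).map_id Δ) x.1
  map_comp θ θ' := by
    ext x
    exact types_congr_hom ((B V).map_comp θ θ') x.1

/-- The map of ambient simplicial sets induced by a monoid homomorphism of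
union monoids. -/
def inducedB {V W : Type u} (h : UM V →* UM W) : B V ⟶ B W where
  app Δ := TypeCat.ofHom fun x => x ⋙ (SingleObj.mapHom (UM V) (UM W)) h
  naturality Δ Δ' θ := rfl

lemma totM_inducedB {V W : Type u} (h : UM V →* UM W) {Δ : SimplexCategoryᵒᵖ}
    (x : (B V).obj Δ) : totM ((inducedB h).app Δ x) = h (totM x) := rfl

/-- The map of nerve spaces induced by a monoid homomorphism of union monoids
carrying faces to faces. -/
def inducedNC {V W : Type u} {Γ : SComplex V} {K : SComplex W} (h : UM V →* UM W)
    (hh : ∀ σ : Set V, σ ∈ Γ.faces → (h (UM.ofSet σ)).toSet ∈ K.faces) :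
    NC Γ ⟶ NC K where
  app Δ := TypeCat.ofHom fun x => ⟨(inducedB h).app Δ x.1, by
    rcases x.2 with h0 | hfc
    · left
      have h1 : totM x.1 = 1 := h0
      show (totM ((inducedB h).app Δ x.1)).toSet = ∅
      rw [totM_inducedB, h1, map_one]
      rfl
    · right
      exact hh (tot x.1) hfc⟩
  naturality Δ Δ' θ := by
    ext x
    exact Subtype.ext (types_congr_hom ((inducedB h).naturality θ) x.1)

/-- The image monoid homomorphism of union monoids induced by a function. -/
def imageHom {V W : Type u} (f : V → W) : UM V →* UM W where
  toFun a := UM.ofSet (f '' a.toSet)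
  map_one' := congrArg UM.ofSet (Set.image_empty f)
  map_mul' a b := congrArg UM.ofSet (Set.image_union f a.toSet b.toSet)

/-- The map of nerve spaces `N f : N Γ → N K` induced by a simplicial complex
map `f : Γ → K`, applying `f` termwise (with `f(∅) = ∅`). -/
def NMap {V W : Type u} {Γ : SComplex V} {K : SComplex W} (f : Map Γ K) :
    NC Γ ⟶ NC K :=
  inducedNC (imageHom f.toFun) (fun _ hσ => f.map_faces hσ)

/-- The union monoid homomorphism induced by a simplicial relation
`π : K' → ĤN K`. -/
def relHom {V' W : Type u} {K' : SComplex V'} {K : SComplex W}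
    (π : Map K' (nerveC K)) : UM V' →* UM W where
  toFun a := UM.ofSet (⋃ x ∈ a.toSet, ((π.toFun x : K.Face) : Set W))
  map_one' := congrArg UM.ofSet (by simp [UM.toSet, UM.ofSet])
  map_mul' a b := congrArg UM.ofSet (Set.biUnion_union a.toSet b.toSet _)

/-- The map of nerve spaces `T(π) : N K' → N K` induced by a simplicial
relation `π : K' → ĤN K`, applying `σ ↦ π̄(σ)` termwise. -/
def Tmap {V' W : Type u} {K' : SComplex V'} {K : SComplex W}
    (π : Map K' (nerveC K)) : NC K' ⟶ NC K :=
  inducedNC (relHom π) (fun σ hσ => by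
    have h2 := (π.map_faces hσ).2.2
    rwa [Set.biUnion_image] at h2)

/-! ### Distributions on simplicial sets -/

/-- The distribution functor on the category of types. -/
noncomputable def DistF (R : Type u) [CommSemiring R] : Type u ⥤ Type u where
  obj U := Dist R U
  map g := TypeCat.ofHom fun p => Dist.map g p
  map_id U := by
    ext p
    exact Subtype.ext Finsupp.mapDomain_id
  map_comp g g' := by
    ext p
    exact Subtype.ext (Finsupp.mapDomain_comp (v := p.1) (f := (g : _ → _)) (g := (g' : _ → _)))

/-- The Dirac natural transformation `δ_X : X → D_R X`. -/
noncomputable def diracN (R : Type u) [CommSemiring R] (X : SSet.{u}) :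
    X ⟶ X ⋙ DistF R where
  app Δ := TypeCat.ofHom fun x => Dist.pure x
  naturality Δ Δ' θ := by
    ext x
    exact Subtype.ext (Finsupp.mapDomain_single).symm

/-- A simplicial distribution on a simplicial set map `f : E → X`:
a simplicial set map `p : X → D_R E` with `D_R f ∘ p = δ_X`. -/
noncomputable def SDist (R : Type u) [CommSemiring R] {E X : SSet.{u}} (f : E ⟶ X) :
    Type u :=
  {p : X ⟶ E ⋙ DistF R // p ≫ Functor.whiskerRight f (DistF R) = diracN R X}

/-- Sections of a simplicial set map. -/
def SSetSection {E X : SSet.{u}} (f : E ⟶ X) : Type u := {s : X ⟶ E // s ≫ f = 𝟙 X}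

/-- Noncontextuality of a simplicial distribution: it is a mixture of the
deterministic distributions coming from sections, i.e. it is in the image of
`Θ : D_R(sections of f) → sDist(f)`. -/
noncomputable def SSetNC (R : Type u) [CommSemiring R] {E X : SSet.{u}} (f : E ⟶ X)
    (q : SDist R f) : Prop :=
  ∃ d : Dist R (SSetSection f), ∀ (Δ : SimplexCategoryᵒᵖ) (x : X.obj Δ),
    q.1.app Δ x = Dist.map (fun s : SSetSection f => s.1.app Δ x) d

/-- The defining property of the simplicial distribution `N p` on `N f`
associated to an empirical model `p` on a bundle scenario `f`:
its value on an `n`-simplex `(σ₁,…,σₙ)` of `N K` at `(γ₁,…,γₙ)` is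
`p_{σ₁∪⋯∪σₙ}(γ₁∪⋯∪γₙ)` when `(N f)(γ⃗) = σ⃗` and the union is nonempty,
is `0` when `(N f)(γ⃗) ≠ σ⃗`, and is the Dirac distribution at the tuple of
empty sets when all the `σᵢ` are empty. -/
def NpSpec {V W : Type u} {Γ : SComplex V} {K : SComplex W} (f : Map Γ K)
    (R : Type u) [CommSemiring R] (p : EmpiricalModel R f)
    (q : NC K ⟶ NC Γ ⋙ DistF R) : Prop :=
  (∀ (Δ : SimplexCategoryᵒᵖ) (x : (NC K).obj Δ) (y : (NC Γ).obj Δ),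
      (NMap f).app Δ y = x →
      ∀ (hu : tot x.1 ∈ K.faces) (γ : f.fiber (tot x.1)),
        (γ : Set V) = tot y.1 → (q.app Δ x).1 y = (p.dist _ hu).1 γ) ∧
  (∀ (Δ : SimplexCategoryᵒᵖ) (x : (NC K).obj Δ) (y : (NC Γ).obj Δ),
      (NMap f).app Δ y ≠ x → (q.app Δ x).1 y = 0) ∧
  (∀ (Δ : SimplexCategoryᵒᵖ) (x : (NC K).obj Δ), tot x.1 = ∅ →
      ∀ y : (NC Γ).obj Δ, tot y.1 = ∅ → q.app Δ x = Dist.pure y)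

/-- The `i`-th edge of an `n`-simplex of a nerve space. -/
def edgeN {V : Type u} {K : SComplex V} {n : ℕ} (i : Fin n)
    (x : (NC K).obj (Opposite.op (SimplexCategory.mk n))) :
    (NC K).obj (Opposite.op (SimplexCategory.mk 1)) :=
  (NC K).map (SimplexCategory.mkOfSucc i).op x

end Ctx

namespace Ctx
open CategoryTheory SComplex

/-! ### Auxiliary lemmas -/

section DistLemmas
variable {R : Type t} [CommSemiring R] {U : Type v} {U' : Type w} {U'' : Type u}

lemma Dist.map_map (g : U' → U'') (h : U → U') (d : Dist R U) :
    Dist.map g (Dist.map h d) = Dist.map (g ∘ h) d :=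
  Subtype.ext (Finsupp.mapDomain_comp).symm

lemma Dist.map_inj {g : U → U'} (hg : Function.Injective g) :
    Function.Injective (Dist.map (R := R) g) := fun _ _ h =>
  Subtype.ext (Finsupp.mapDomain_injective hg (congrArg Subtype.val h))

lemma Dist.map_congr {g g' : U → U'} (h : ∀ a, g a = g' a) (d : Dist R U) :
    Dist.map g d = Dist.map g' d := by
  have : g = g' := funext h
  rw [this]

open scoped Classical in
lemma Dist.map_apply (g : U → U') (d : Dist R U) (y : U') :
    (Dist.map g d).1 y = d.1.sum fun a r => if g a = y then r else 0 := by
  show (Finsupp.mapDomain g d.1) y = _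
  rw [Finsupp.mapDomain, Finsupp.sum_apply]
  refine Finsupp.sum_congr fun a _ => ?_
  rw [Finsupp.single_apply]

lemma Dist.map_apply_congr {g : U → U'} {g' : U → U''} {y : U'} {y' : U''}
    (d : Dist R U) (h : ∀ a, g a = y ↔ g' a = y') :
    (Dist.map g d).1 y = (Dist.map g' d).1 y' := by
  classical
  rw [Dist.map_apply, Dist.map_apply]
  refine Finsupp.sum_congr fun a _ => ?_
  by_cases hc : g a = y
  · rw [if_pos hc, if_pos ((h a).mp hc)]
  · rw [if_neg hc, if_neg (fun hc' => hc ((h a).mpr hc'))]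

lemma Dist.map_const {g : U → U'} {c : U'} (h : ∀ a, g a = c) (d : Dist R U) :
    Dist.map g d = Dist.pure c := by
  classical
  apply Subtype.ext
  show Finsupp.mapDomain g d.1 = Finsupp.single c 1
  have hd : Finsupp.single c (1 : R) = Finsupp.single c (d.1.sum fun _ r => r) := by
    rw [d.2]
  rw [hd, Finsupp.mapDomain]
  ext b
  rw [Finsupp.sum_apply, Finsupp.single_apply]
  by_cases hb : c = b
  · subst hb
    rw [if_pos rfl, Finsupp.sum, Finsupp.sum]
    exact Finset.sum_congr rfl fun a _ => by rw [h, Finsupp.single_eq_same]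
  · rw [if_neg hb, Finsupp.sum]
    apply Finset.sum_eq_zero
    intro a _
    rw [h, Finsupp.single_apply, if_neg hb]

end DistLemmas

section Part1
variable {V : Type u} {K : SComplex V} {O : V → Type u}

/-- The bundle section of the event bundle induced by a global assignment. -/
def toSection (K : SComplex V) (O : V → Type u) (g : ∀ x : V, O x) :
    BSection (eventProj K O) := by
  refine ⟨⟨fun x => ⟨x, g x⟩, fun σ hσ => ⟨?_, ?_⟩⟩, ?_⟩
  · have h : Sigma.fst '' ((fun x => (⟨x, g x⟩ : (y : V) × O y)) '' σ) = σ := by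
      rw [← Set.image_comp]
      simp [Function.comp_def]
    rw [h]; exact hσ
  · rintro p ⟨x, hx, rfl⟩ q ⟨y, hy, rfl⟩ h
    cases h; rfl
  · apply SComplex.Map.ext
    funext x
    rfl

/-- The global assignment induced by a bundle section of the event bundle. -/
def toGlobal (s : BSection (eventProj K O)) (x : V) : O x :=
  (show (s.1.toFun x).1 = x from congrFun (congrArg Map.toFun s.2) x) ▸ (s.1.toFun x).2

lemma sigma_cast_eq {x : V} (p : (y : V) × O y) (h : p.1 = x) : p = ⟨x, h ▸ p.2⟩ := by
  cases p; cases h; rfl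

lemma toFun_bsection_eq (s : BSection (eventProj K O)) (x : V) :
    s.1.toFun x = ⟨x, toGlobal s x⟩ := by
  unfold toGlobal
  exact sigma_cast_eq _ _

lemma ev_eq_graph (s : BSection (eventProj K O)) (σ : Set V) (hσ : σ ∈ K.faces) :
    BSection.ev (eventProj K O) σ hσ s
      = graphFiber K O hσ (fun x : σ => toGlobal s x.1) := by
  apply Subtype.ext
  show s.1.toFun '' σ = _
  ext p
  constructor
  · rintro ⟨x, hx, rfl⟩
    rw [toFun_bsection_eq]
    exact ⟨hx, rfl⟩
  · rintro ⟨h, hp⟩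
    refine ⟨p.1, h, ?_⟩
    rw [toFun_bsection_eq]
    obtain ⟨a, o⟩ := p
    exact congrArg (Sigma.mk a) hp.symm

lemma ev_toSection (g : ∀ x : V, O x) (σ : Set V) (hσ : σ ∈ K.faces) :
    BSection.ev (eventProj K O) σ hσ (toSection K O g)
      = graphFiber K O hσ (fun x : σ => g x.1) := by
  apply Subtype.ext
  show (fun x => (⟨x, g x⟩ : (y : V) × O y)) '' σ = _
  ext p
  constructor
  · rintro ⟨x, hx, rfl⟩
    exact ⟨hx, rfl⟩
  · rintro ⟨h, hp⟩
    refine ⟨p.1, h, ?_⟩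
    obtain ⟨a, o⟩ := p
    exact congrArg (Sigma.mk a) hp.symm

lemma graphFiber_injective (σ : Set V) (hσ : σ ∈ K.faces) :
    Function.Injective (graphFiber K O (σ := σ) hσ) := by
  intro g1 g2 h
  funext x
  have h1 : (⟨x.1, g1 x⟩ : (y : V) × O y) ∈ (graphFiber K O hσ g1).1 := ⟨x.2, rfl⟩
  rw [h] at h1
  obtain ⟨hx, he⟩ := h1
  exact he.trans rfl

end Part1


section Part2
variable {V W : Type u} {Γ : SComplex V} {K : SComplex W}

lemma map_hom_congr {n : ℕ} (F : ComposableArrows (SingleObj (UM V)) n)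
    {i j : Fin (n + 1)} (h h' : i ⟶ j) : F.map h = F.map h' := by
  congr 1
  exact Subsingleton.elim h h'

lemma map_subset_tot {Δ : SimplexCategoryᵒᵖ} (F : (B V).obj Δ)
    {i j : Fin (Δ.unop.len + 1)} (h : i ⟶ j) : UM.toSet (F.map h) ⊆ tot F := by
  have e : F.map (homOfLE (Fin.zero_le (Fin.last Δ.unop.len)))
      = F.map (homOfLE (Fin.zero_le i)) ≫ (F.map h ≫ F.map (homOfLE (Fin.le_last j))) := by
    rw [← F.map_comp, ← F.map_comp]
    exact map_hom_congr F _ _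
  show _ ⊆ UM.toSet (F.map (homOfLE (Fin.zero_le (Fin.last Δ.unop.len))))
  rw [e, SingleObj.comp_as_mul, SingleObj.comp_as_mul, UM.toSet_mul, UM.toSet_mul]
  intro a ha
  exact Or.inl (Or.inr ha)

lemma injOn_of_face (f : Map Γ K) (hf : f.DiscV) {γ : Set V} (hγ : γ ∈ Γ.faces) :
    Set.InjOn f.toFun γ := by
  intro a ha b hb hab
  by_contra hne
  refine hf a b hne hab (Γ.down_closed hγ ?_ ⟨a, Or.inl rfl⟩)
  intro z hz
  rcases hz with rfl | rfl
  exacts [ha, hb]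

lemma NMap_map (f : Map Γ K) {Δ : SimplexCategoryᵒᵖ} (y : (NC Γ).obj Δ)
    {i j : Fin (Δ.unop.len + 1)} (h : i ⟶ j) :
    UM.toSet (((NMap f).app Δ y).1.map h) = f.toFun '' UM.toSet (y.1.map h) := rfl

lemma tot_NMap (f : Map Γ K) {Δ : SimplexCategoryᵒᵖ} (y : (NC Γ).obj Δ) :
    tot ((NMap f).app Δ y).1 = f.toFun '' tot y.1 := rfl

/-- Uniqueness of simplices of the nerve space of the total complex, over a fixed
simplex of the base, with given total set (the face case). -/
lemma simplex_unique (f : Map Γ K) (hf : f.DiscV) {Δ : SimplexCategoryᵒᵖ}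
    (y y' : (NC Γ).obj Δ) (hmap : (NMap f).app Δ y = (NMap f).app Δ y')
    (htot : tot y.1 = tot y'.1) (hface : tot y.1 ∈ Γ.faces) : y = y' := by
  apply Subtype.ext
  show (y.1 : Fin (Δ.unop.len + 1) ⥤ SingleObj (UM V)) = y'.1
  refine CategoryTheory.Functor.ext (fun i => rfl) (fun i j h => ?_)
  simp only [eqToHom_refl, Category.comp_id, Category.id_comp]
  have hinj := injOn_of_face f hf hface
  have h1 : UM.toSet (y.1.map h) ⊆ tot y.1 := map_subset_tot y.1 h
  have h2 : UM.toSet (y'.1.map h) ⊆ tot y.1 := htot ▸ map_subset_tot y'.1 h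
  have himg : f.toFun '' UM.toSet (y.1.map h) = f.toFun '' UM.toSet (y'.1.map h) := by
    rw [← NMap_map f y h, ← NMap_map f y' h, hmap]
  exact (hinj.image_eq_image_iff h1 h2).mp himg

/-- Uniqueness of simplices of a nerve space with empty total set. -/
lemma simplex_unique_empty {Δ : SimplexCategoryᵒᵖ} (y y' : (NC Γ).obj Δ)
    (h : tot y.1 = ∅) (h' : tot y'.1 = ∅) : y = y' := by
  apply Subtype.ext
  show (y.1 : Fin (Δ.unop.len + 1) ⥤ SingleObj (UM V)) = y'.1
  refine CategoryTheory.Functor.ext (fun i => rfl) (fun i j hm => ?_)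
  simp only [eqToHom_refl, Category.comp_id, Category.id_comp]
  have h1 : UM.toSet (y.1.map hm) = ∅ := by
    have hs := map_subset_tot y.1 hm
    rw [h] at hs
    exact Set.subset_empty_iff.mp hs
  have h2 : UM.toSet (y'.1.map hm) = ∅ := by
    have hs := map_subset_tot y'.1 hm
    rw [h'] at hs
    exact Set.subset_empty_iff.mp hs
  exact h1.trans h2.symm

/-- The simplex of a nerve space all of whose entries are empty. -/
def emptyCA (Γ : SComplex V) (Δ : SimplexCategoryᵒᵖ) : (NC Γ).obj Δ :=
  ⟨(CategoryTheory.Functor.const _).obj (SingleObj.star (UM V)), Or.inl rfl⟩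

lemma tot_emptyCA (Γ : SComplex V) (Δ : SimplexCategoryᵒᵖ) : tot (emptyCA Γ Δ).1 = ∅ := rfl

/-- The 1-simplex of `B V` with entry `a`. -/
def mk1 (a : Set V) : ComposableArrows (SingleObj (UM V)) 1 where
  obj _ := SingleObj.star (UM V)
  map {i j} _ := UM.ofSet {v | v ∈ a ∧ i.val = 0 ∧ j.val = 1}
  map_id i := by
    show UM.ofSet _ = (1 : UM V)
    have h : {v | v ∈ a ∧ i.val = 0 ∧ i.val = 1} = (∅ : Set V) :=
      Set.eq_empty_iff_forall_notMem.mpr (fun v ⟨_, h0, h1⟩ => by omega)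
    exact congrArg UM.ofSet h
  map_comp {i j k} hm hm' := by
    have hij : i.val ≤ j.val := leOfHom hm
    have hjk : j.val ≤ k.val := leOfHom hm'
    show UM.ofSet _ = UM.ofSet _ * UM.ofSet _
    have h : {v | v ∈ a ∧ i.val = 0 ∧ k.val = 1}
        = {v | v ∈ a ∧ j.val = 0 ∧ k.val = 1} ∪ {v | v ∈ a ∧ i.val = 0 ∧ j.val = 1} := by
      have hj : j.val ≤ 1 := by omega
      ext v
      constructor
      · rintro ⟨hv, h0, h1⟩
        by_cases hc : j.val = 0
        · exact Or.inl ⟨hv, hc, h1⟩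
        · exact Or.inr ⟨hv, h0, by omega⟩
      · rintro (⟨hv, h0, h1⟩ | ⟨hv, h0, h1⟩)
        · exact ⟨hv, by omega, h1⟩
        · exact ⟨hv, h0, by omega⟩
    exact congrArg UM.ofSet h

lemma mk1_map (a : Set V) {i j : Fin 2} (h : i ⟶ j) :
    UM.toSet ((mk1 a).map h) = {v | v ∈ a ∧ i.val = 0 ∧ j.val = 1} := rfl

lemma tot_mk1 (a : Set V) :
    tot (show (B V).obj (Opposite.op (SimplexCategory.mk 1)) from mk1 a) = a := by
  show {v | v ∈ a ∧ (0 : Fin 2).val = 0 ∧ (Fin.last 1).val = 1} = a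
  ext v
  simp [Fin.last]

/-- The 1-simplex of the nerve space with entry a given face. -/
def mk1NC (K : SComplex W) {σ : Set W} (hσ : σ ∈ K.faces) :
    (NC K).obj (Opposite.op (SimplexCategory.mk 1)) :=
  ⟨mk1 σ, Or.inr (by rw [tot_mk1]; exact hσ)⟩

lemma tot_mk1NC (K : SComplex W) {σ : Set W} (hσ : σ ∈ K.faces) :
    tot (mk1NC K hσ).1 = σ := tot_mk1 σ

/-- 1-simplices of `B V` are determined by their unique entry. -/
lemma ca1_ext (F G : ComposableArrows (SingleObj (UM V)) 1)
    (h : F.map (homOfLE (Fin.zero_le (1 : Fin 2))) = G.map (homOfLE (Fin.zero_le (1 : Fin 2)))) :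
    F = G := by
  show (F : Fin 2 ⥤ SingleObj (UM V)) = G
  refine CategoryTheory.Functor.ext (fun i => rfl) (fun i j hm => ?_)
  simp only [eqToHom_refl, Category.comp_id, Category.id_comp]
  by_cases hij : i = j
  · subst hij
    rw [map_hom_congr F hm (𝟙 i), map_hom_congr G hm (𝟙 i), F.map_id, G.map_id]
    rfl
  · have hle : i.val ≤ j.val := leOfHom hm
    have hne : i.val ≠ j.val := fun hv => hij (Fin.ext hv)
    have hib := i.isLt
    have hjb := j.isLt
    have h0v : (0 : Fin (1 + 1)).val = 0 := rfl
    have h1v : (1 : Fin (1 + 1)).val = 1 := rfl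
    have hi : i = 0 := Fin.ext (by omega)
    have hj : j = 1 := Fin.ext (by omega)
    subst hi; subst hj
    rw [map_hom_congr F hm (homOfLE (Fin.zero_le 1)), h,
      map_hom_congr G (homOfLE (Fin.zero_le 1)) hm]

/-- The 2-simplex of `B V` with entries `a` and `b`. -/
def mk2 (a b : Set V) : ComposableArrows (SingleObj (UM V)) 2 where
  obj _ := SingleObj.star (UM V)
  map {i j} _ := UM.ofSet {v | (v ∈ a ∧ i.val = 0 ∧ 1 ≤ j.val) ∨ (v ∈ b ∧ i.val ≤ 1 ∧ j.val = 2)}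
  map_id i := by
    show UM.ofSet _ = (1 : UM V)
    have h : {v | (v ∈ a ∧ i.val = 0 ∧ 1 ≤ i.val) ∨ (v ∈ b ∧ i.val ≤ 1 ∧ i.val = 2)}
        = (∅ : Set V) :=
      Set.eq_empty_iff_forall_notMem.mpr
        (fun v hv => by rcases hv with ⟨_, h0, h1⟩ | ⟨_, h0, h1⟩ <;> omega)
    exact congrArg UM.ofSet h
  map_comp {i j k} hm hm' := by
    have hij : i.val ≤ j.val := leOfHom hm
    have hjk : j.val ≤ k.val := leOfHom hm'
    have hk2 : k.val ≤ 2 := by have := k.isLt; omega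
    show UM.ofSet _ = UM.ofSet _ * UM.ofSet _
    refine congrArg UM.ofSet ?_
    ext v
    constructor
    · rintro (⟨hv, h0, h1⟩ | ⟨hv, h0, h1⟩)
      · by_cases hc : 1 ≤ j.val
        · exact Or.inr (Or.inl ⟨hv, h0, hc⟩)
        · exact Or.inl (Or.inl ⟨hv, by omega, h1⟩)
      · by_cases hc : j.val = 2
        · exact Or.inr (Or.inr ⟨hv, h0, hc⟩)
        · exact Or.inl (Or.inr ⟨hv, by omega, h1⟩)
    · rintro ((⟨hv, h0, h1⟩ | ⟨hv, h0, h1⟩) | (⟨hv, h0, h1⟩ | ⟨hv, h0, h1⟩))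
      · exact Or.inl ⟨hv, by omega, h1⟩
      · exact Or.inr ⟨hv, by omega, h1⟩
      · exact Or.inl ⟨hv, h0, by omega⟩
      · exact Or.inr ⟨hv, h0, by omega⟩

lemma mk2_map (a b : Set V) {i j : Fin 3} (h : i ⟶ j) :
    UM.toSet ((mk2 a b).map h)
      = {v | (v ∈ a ∧ i.val = 0 ∧ 1 ≤ j.val) ∨ (v ∈ b ∧ i.val ≤ 1 ∧ j.val = 2)} := rfl

end Part2


section Part2b
variable {V W : Type u} {Γ : SComplex V} {K : SComplex W}

/-- The canonical morphism `0 ⟶ 1` in `Fin 2`. -/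
def e01 : (0 : Fin 2) ⟶ (1 : Fin 2) := homOfLE (Fin.zero_le 1)

lemma mk1_edge (a : Set V) :
    UM.toSet ((mk1 a).map (homOfLE (Fin.zero_le (1 : Fin 2)))) = a := by
  rw [mk1_map]
  ext v
  simp

lemma mk2_edge02 (a b : Set V) :
    UM.toSet ((mk2 a b).map ((SimplexCategory.toCat.map (SimplexCategory.δ (1 : Fin 3))).toFunctor.map
      e01)) = a ∪ b := by
  refine (mk2_map a b _).trans ?_
  have hi : ((SimplexCategory.toCat.map (SimplexCategory.δ (1 : Fin 3))).toFunctor.obj (0 : Fin 2)).val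
      = 0 := rfl
  have hj : ((SimplexCategory.toCat.map (SimplexCategory.δ (1 : Fin 3))).toFunctor.obj (1 : Fin 2)).val
      = 2 := rfl
  rw [hi, hj]
  ext v
  simp

lemma mk2_edge01 (a b : Set V) :
    UM.toSet ((mk2 a b).map ((SimplexCategory.toCat.map (SimplexCategory.δ (2 : Fin 3))).toFunctor.map
      e01)) = a := by
  refine (mk2_map a b _).trans ?_
  have hi : ((SimplexCategory.toCat.map (SimplexCategory.δ (2 : Fin 3))).toFunctor.obj (0 : Fin 2)).val
      = 0 := rfl
  have hj : ((SimplexCategory.toCat.map (SimplexCategory.δ (2 : Fin 3))).toFunctor.obj (1 : Fin 2)).val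
      = 1 := rfl
  rw [hi, hj]
  ext v
  simp

lemma sec_app (f : Map Γ K) (S : SSetSection (NMap f)) {Δ : SimplexCategoryᵒᵖ}
    (x : (NC K).obj Δ) : (NMap f).app Δ (S.1.app Δ x) = x :=
  types_congr_hom (congrArg (fun T => NatTrans.app T Δ) S.2) x

lemma sec_tot_face (f : Map Γ K) (S : SSetSection (NMap f)) {Δ : SimplexCategoryᵒᵖ}
    (x : (NC K).obj Δ) (hx : tot x.1 ∈ K.faces) :
    tot (S.1.app Δ x).1 ∈ Γ.faces ∧ f.toFun '' tot (S.1.app Δ x).1 = tot x.1 := by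
  have himg : f.toFun '' tot (S.1.app Δ x).1 = tot x.1 := by
    rw [← tot_NMap f (S.1.app Δ x), sec_app f S x]
  refine ⟨?_, himg⟩
  rcases (S.1.app Δ x).2 with h | h
  · exfalso
    rw [h, Set.image_empty] at himg
    exact (K.nonempty_mem _ hx).ne_empty himg.symm
  · exact h

/-- The total set of the value of a simplicial-set section on the 1-simplex of a face. -/
def secT (f : Map Γ K) (S : SSetSection (NMap f)) {σ : Set W} (hσ : σ ∈ K.faces) : Set V :=
  tot (S.1.app (Opposite.op (SimplexCategory.mk 1)) (mk1NC K hσ)).1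

lemma secT_face (f : Map Γ K) (S : SSetSection (NMap f)) {σ : Set W} (hσ : σ ∈ K.faces) :
    secT f S hσ ∈ Γ.faces ∧ f.toFun '' secT f S hσ = σ := by
  have h := sec_tot_face f S (mk1NC K hσ) (by rw [tot_mk1NC]; exact hσ)
  rwa [tot_mk1NC] at h

lemma secT_nonempty (f : Map Γ K) (S : SSetSection (NMap f)) (w : W) :
    (secT f S (K.singleton_mem w)).Nonempty := by
  apply Set.Nonempty.of_image (f := f.toFun)
  rw [(secT_face f S (K.singleton_mem w)).2]
  exact Set.singleton_nonempty w

/-- The vertex map of the bundle section extracted from a simplicial-set section. -/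
noncomputable def secFun (f : Map Γ K) (S : SSetSection (NMap f)) (w : W) : V :=
  (secT_nonempty f S w).choose

lemma secFun_mem (f : Map Γ K) (S : SSetSection (NMap f)) (w : W) :
    secFun f S w ∈ secT f S (K.singleton_mem w) :=
  (secT_nonempty f S w).choose_spec

lemma secFun_spec (f : Map Γ K) (S : SSetSection (NMap f)) (w : W) :
    f.toFun (secFun f S w) = w := by
  have h : f.toFun (secFun f S w) ∈ f.toFun '' secT f S (K.singleton_mem w) :=
    Set.mem_image_of_mem _ (secFun_mem f S w)
  rw [(secT_face f S (K.singleton_mem w)).2] at h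
  exact h

lemma secFun_mem_secT (f : Map Γ K) (S : SSetSection (NMap f))
    {σ : Set W} (hσ : σ ∈ K.faces) {w : W} (hw : w ∈ σ) :
    secFun f S w ∈ secT f S hσ := by
  have htot2 : tot (show (B W).obj (Opposite.op (SimplexCategory.mk 2)) from
      mk2 ({w} : Set W) σ) = σ := by
    show UM.toSet ((mk2 ({w} : Set W) σ).map (homOfLE (Fin.zero_le (Fin.last 2)))) = σ
    rw [mk2_map]
    have hi : ((0 : Fin 3)).val = 0 := rfl
    have hj : ((Fin.last 2)).val = 2 := rfl
    rw [hi, hj]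
    ext v
    constructor
    · rintro (⟨hv, -, -⟩ | ⟨hv, -, -⟩)
      · rwa [Set.mem_singleton_iff.mp hv]
      · exact hv
    · intro hv
      exact Or.inr ⟨hv, by omega, rfl⟩
  set X : (NC K).obj (Opposite.op (SimplexCategory.mk 2)) :=
    ⟨mk2 ({w} : Set W) σ, Or.inr (by rw [htot2]; exact hσ)⟩ with hX
  have hd1 : (NC K).map (SimplexCategory.δ (1 : Fin 3)).op X = mk1NC K hσ := by
    apply Subtype.ext
    apply ca1_ext
    show (mk2 ({w} : Set W) σ).map ((SimplexCategory.toCat.map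
      (SimplexCategory.δ (1 : Fin 3))).toFunctor.map e01) = (mk1 σ).map (homOfLE (Fin.zero_le (1 : Fin 2)))
    have h1 := mk2_edge02 ({w} : Set W) σ
    have h2 := mk1_edge σ
    have h3 : ({w} : Set W) ∪ σ = σ :=
      Set.union_eq_self_of_subset_left (Set.singleton_subset_iff.mpr hw)
    show UM.toSet _ = UM.toSet _
    rw [h1, h2, h3]
  have hd2 : (NC K).map (SimplexCategory.δ (2 : Fin 3)).op X = mk1NC K (K.singleton_mem w) := by
    apply Subtype.ext
    apply ca1_ext
    show (mk2 ({w} : Set W) σ).map ((SimplexCategory.toCat.map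
      (SimplexCategory.δ (2 : Fin 3))).toFunctor.map e01) = (mk1 {w}).map (homOfLE (Fin.zero_le (1 : Fin 2)))
    have h1 := mk2_edge01 ({w} : Set W) σ
    have h2 := mk1_edge ({w} : Set W)
    show UM.toSet _ = UM.toSet _
    rw [h1, h2]
  set Y := S.1.app (Opposite.op (SimplexCategory.mk 2)) X with hY
  have hnat1 : S.1.app _ ((NC K).map (SimplexCategory.δ (1 : Fin 3)).op X)
      = (NC Γ).map (SimplexCategory.δ (1 : Fin 3)).op Y :=
    types_congr_hom (S.1.naturality (SimplexCategory.δ (1 : Fin 3)).op) X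
  have hnat2 : S.1.app _ ((NC K).map (SimplexCategory.δ (2 : Fin 3)).op X)
      = (NC Γ).map (SimplexCategory.δ (2 : Fin 3)).op Y :=
    types_congr_hom (S.1.naturality (SimplexCategory.δ (2 : Fin 3)).op) X
  have e1 : secT f S hσ = UM.toSet (Y.1.map
      ((SimplexCategory.toCat.map (SimplexCategory.δ (1 : Fin 3))).toFunctor.map e01)) := by
    show tot (S.1.app _ (mk1NC K hσ)).1 = _
    rw [← hd1, hnat1]
    show UM.toSet (((B V).map (SimplexCategory.δ (1 : Fin 3)).op Y.1).map
      (homOfLE (Fin.zero_le (Fin.last 1)))) = _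
    exact congrArg UM.toSet (map_hom_congr _ _ _)
  have e2 : secT f S hσ = tot Y.1 :=
    e1.trans (congrArg UM.toSet (map_hom_congr Y.1 _ _))
  have e3 : secT f S (K.singleton_mem w) = UM.toSet (Y.1.map
      ((SimplexCategory.toCat.map (SimplexCategory.δ (2 : Fin 3))).toFunctor.map e01)) := by
    show tot (S.1.app _ (mk1NC K (K.singleton_mem w))).1 = _
    rw [← hd2, hnat2]
    show UM.toSet (((B V).map (SimplexCategory.δ (2 : Fin 3)).op Y.1).map
      (homOfLE (Fin.zero_le (Fin.last 1)))) = _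
    exact congrArg UM.toSet (map_hom_congr _ _ _)
  have hmem := secFun_mem f S w
  rw [e3] at hmem
  rw [e2]
  exact map_subset_tot Y.1 _ hmem

lemma secT_eq (f : Map Γ K) (hf : f.DiscV) (S : SSetSection (NMap f))
    {σ : Set W} (hσ : σ ∈ K.faces) :
    secT f S hσ = secFun f S '' σ := by
  obtain ⟨hface, himg⟩ := secT_face f S hσ
  have hinj := injOn_of_face f hf hface
  apply Set.eq_of_subset_of_subset
  · intro v hv
    have hfv : f.toFun v ∈ σ := by
      rw [← himg]
      exact Set.mem_image_of_mem _ hv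
    have hmem := secFun_mem_secT f S hσ hfv
    have hvv : v = secFun f S (f.toFun v) :=
      hinj hv hmem (secFun_spec f S (f.toFun v)).symm
    exact ⟨f.toFun v, hfv, hvv.symm⟩
  · rintro v ⟨u, hu, rfl⟩
    exact secFun_mem_secT f S hσ hu

/-- The bundle section extracted from a simplicial-set section. -/
noncomputable def phiSec (f : Map Γ K) (hf : f.DiscV) (S : SSetSection (NMap f)) :
    BSection f := by
  refine ⟨⟨secFun f S, fun σ hσ => ?_⟩, ?_⟩
  · rw [← secT_eq f hf S hσ]
    exact (secT_face f S hσ).1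
  · apply SComplex.Map.ext
    funext w
    exact secFun_spec f S w

/-- `N` applied to a bundle section gives a simplicial-set section. -/
lemma NMap_section (f : Map Γ K) (bs : BSection f) : NMap bs.1 ≫ NMap f = 𝟙 (NC K) := by
  have hm : (imageHom f.toFun).comp (imageHom bs.1.toFun) = MonoidHom.id (UM W) := by
    apply MonoidHom.ext
    intro a
    show UM.ofSet (f.toFun '' (bs.1.toFun '' UM.toSet a)) = a
    rw [← Set.image_comp]
    have hc : f.toFun ∘ bs.1.toFun = fun x => x := congrArg Map.toFun bs.2
    rw [hc]
    exact congrArg UM.ofSet (Set.image_id' _)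
  apply NatTrans.ext
  funext Δ
  ext : 1
  ext : 1
  funext x
  obtain ⟨F, hF⟩ := x
  apply Subtype.ext
  change Fin (Δ.unop.len + 1) ⥤ SingleObj (UM W) at F
  show (F ⋙ SingleObj.mapHom _ _ (imageHom bs.1.toFun)) ⋙
      SingleObj.mapHom _ _ (imageHom f.toFun) = F
  rw [Functor.assoc, ← SingleObj.mapHom_comp, hm, SingleObj.mapHom_id, Functor.comp_id]

lemma NMap_section_app (f : Map Γ K) (bs : BSection f) {Δ : SimplexCategoryᵒᵖ}
    (x : (NC K).obj Δ) : (NMap f).app Δ ((NMap bs.1).app Δ x) = x :=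
  types_congr_hom (congrArg (fun T => NatTrans.app T Δ) (NMap_section f bs)) x

lemma tot_ev (f : Map Γ K) (σ : Set W) (hσ : σ ∈ K.faces) (bs : BSection f) :
    (BSection.ev f σ hσ bs : Set V) = bs.1.toFun '' σ := rfl

end Part2b

set_option maxHeartbeats 2000000 in
/-- contextuality is preserved and reflected by `η` (from
scenarios to bundle scenarios) and by `ζ = N` (from bundle scenarios to
simplicial scenarios). -/
theorem statement_19 (R : Type u) [CommSemiring R]
    (hR : ∀ a b : R, a + b = 0 → a = 0 ∧ b = 0) :
    (∀ {V : Type u} (K : SComplex V) (O : V → Type u), (∀ x, Nonempty (O x)) →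
        ∀ (e : ScenEmp R K O) (q : EmpiricalModel R (eventProj K O)),
        (∀ σ (hσ : σ ∈ K.faces),
          q.dist σ hσ = Dist.map (graphFiber K O hσ) (e.dist σ hσ)) →
        (ScenNC R K O e ↔ BundleNC R (eventProj K O) q)) ∧
    (∀ {V W : Type u} {Γ : SComplex V} {K : SComplex W} (f : Map Γ K), f.IsBundle →
        ∀ (p : EmpiricalModel R f) (q : SDist R (NMap f)), NpSpec f R p q.1 →
        (BundleNC R f p ↔ SSetNC R (NMap f) q)) := by
  constructor
  · -- Part 1: scenarios vs bundle scenarios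
    intro V K O _hO e q hq
    constructor
    · rintro ⟨d, hd⟩
      refine ⟨Dist.map (toSection K O) d, fun σ hσ => ?_⟩
      rw [hq σ hσ, hd σ hσ, Dist.map_map, Dist.map_map]
      exact Dist.map_congr (fun g => (ev_toSection g σ hσ).symm) d
    · rintro ⟨d, hd⟩
      refine ⟨Dist.map (fun s => toGlobal s) d, fun σ hσ => ?_⟩
      apply Dist.map_inj (graphFiber_injective σ hσ)
      rw [← hq σ hσ, hd σ hσ, Dist.map_map, Dist.map_map]
      exact Dist.map_congr (fun s => ev_eq_graph s σ hσ) d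
  · -- Part 2: bundle scenarios vs simplicial distributions
    intro V W Γ K f hf p q hspec
    have hdisc : f.DiscV := hf.2.2
    constructor
    · rintro ⟨d, hd⟩
      refine ⟨Dist.map (fun bs : BSection f =>
        (⟨NMap bs.1, NMap_section f bs⟩ : SSetSection (NMap f))) d, fun Δ x => ?_⟩
      erw [Dist.map_map]
      rcases x.2 with hx | hx
      · rw [hspec.2.2 Δ x hx (emptyCA Γ Δ) (tot_emptyCA Γ Δ)]
        refine (Dist.map_const (fun bs => ?_) d).symm
        apply simplex_unique_empty
        · show tot ((NMap bs.1).app Δ x).1 = ∅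
          rw [tot_NMap bs.1 x, hx, Set.image_empty]
        · exact tot_emptyCA Γ Δ
      · apply Subtype.ext
        refine Finsupp.ext fun y => ?_
        by_cases hy : (NMap f).app Δ y = x
        · have himg : f.toFun '' tot y.1 = tot x.1 := by rw [← tot_NMap f y, hy]
          have hyf : tot y.1 ∈ Γ.faces := by
            rcases y.2 with h0 | h0
            · exfalso
              rw [h0, Set.image_empty] at himg
              exact (K.nonempty_mem _ hx).ne_empty himg.symm
            · exact h0
          rw [hspec.1 Δ x y hy hx ⟨tot y.1, hyf, himg⟩ rfl, hd (tot x.1) hx]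
          refine Dist.map_apply_congr d fun bs => ?_
          constructor
          · intro hbs
            have hbs' : bs.1.toFun '' tot x.1 = tot y.1 :=
              congrArg Subtype.val hbs
            show (NMap bs.1).app Δ x = y
            apply simplex_unique f hdisc _ y ?_ ?_ ?_
            · rw [NMap_section_app f bs x, hy]
            · show tot ((NMap bs.1).app Δ x).1 = tot y.1
              rw [tot_NMap bs.1 x]
              exact hbs'
            · show tot ((NMap bs.1).app Δ x).1 ∈ Γ.faces
              rw [tot_NMap bs.1 x, hbs']
              exact hyf
          · intro hbs
            have hbs' : (NMap bs.1).app Δ x = y := hbs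
            apply Subtype.ext
            show bs.1.toFun '' tot x.1 = tot y.1
            rw [← tot_NMap bs.1 x, hbs']
        · rw [hspec.2.1 Δ x y hy, Dist.map_apply, Finsupp.sum]
          symm
          refine Finset.sum_eq_zero fun bs _ => ?_
          rw [if_neg]
          intro hbs
          have hbs' : (NMap bs.1).app Δ x = y := hbs
          exact hy (by rw [← hbs']; exact NMap_section_app f bs x)
    · rintro ⟨d, hd⟩
      refine ⟨Dist.map (phiSec f hdisc) d, fun σ hσ => ?_⟩
      rw [Dist.map_map]
      apply Subtype.ext
      refine Finsupp.ext fun γ => ?_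
      have hσ1 : tot (mk1NC K hσ).1 ∈ K.faces := by rw [tot_mk1NC]; exact hσ
      have e : tot (mk1NC K hσ).1 = σ := tot_mk1NC K hσ
      set y : (NC Γ).obj (Opposite.op (SimplexCategory.mk 1)) :=
        ⟨mk1 (γ : Set V), Or.inr (by rw [tot_mk1]; exact γ.2.1)⟩ with hydef
      have hxy : (NMap f).app _ y = mk1NC K hσ := by
        apply Subtype.ext
        apply ca1_ext
        show UM.toSet (((NMap f).app _ y).1.map (homOfLE (Fin.zero_le (1 : Fin 2))))
          = UM.toSet ((mk1 σ).map (homOfLE (Fin.zero_le (1 : Fin 2))))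
        rw [NMap_map f y, mk1_edge, mk1_edge]
        exact γ.2.2
      have hq1 := hspec.1 (Opposite.op (SimplexCategory.mk 1)) (mk1NC K hσ) y hxy hσ1
        ⟨(γ : Set V), γ.2.1, by rw [γ.2.2]; exact e.symm⟩ (tot_mk1 _).symm
      have hp : (p.dist (tot (mk1NC K hσ).1) hσ1).1
          ⟨(γ : Set V), γ.2.1, by rw [γ.2.2]; exact e.symm⟩ = (p.dist σ hσ).1 γ := by
        have key : ∀ (τ τ' : Set W) (_ : τ = τ') (h1 : τ ∈ K.faces) (h2 : τ' ∈ K.faces)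
            (γ1 : f.fiber τ) (γ2 : f.fiber τ'), (γ1 : Set V) = (γ2 : Set V) →
            (p.dist τ h1).1 γ1 = (p.dist τ' h2).1 γ2 := by
          rintro τ τ' rfl h1 h2 γ1 γ2 hg
          rw [Subtype.ext hg]
        exact key _ _ e hσ1 hσ _ _ rfl
      rw [← hp, ← hq1, hd _ (mk1NC K hσ)]
      refine Dist.map_apply_congr d fun S => ?_
      constructor
      · intro hS
        have hS' : S.1.app _ (mk1NC K hσ) = y := hS
        apply Subtype.ext
        show (phiSec f hdisc S).1.toFun '' σ = (γ : Set V)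
        have hphi : (phiSec f hdisc S).1.toFun = secFun f S := rfl
        rw [hphi, ← secT_eq f hdisc S hσ]
        show tot (S.1.app _ (mk1NC K hσ)).1 = _
        rw [hS']
        exact tot_mk1 _
      · intro hS
        have hS' : BSection.ev f σ hσ (phiSec f hdisc S) = γ := hS
        show S.1.app _ (mk1NC K hσ) = y
        apply simplex_unique f hdisc _ _ ?_ ?_ ?_
        · rw [sec_app f S (mk1NC K hσ), hxy]
        · show tot (S.1.app _ (mk1NC K hσ)).1 = tot y.1
          have h1 : tot (S.1.app _ (mk1NC K hσ)).1 = secFun f S '' σ := by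
            rw [← secT_eq f hdisc S hσ]
            rfl
          have h2 : (BSection.ev f σ hσ (phiSec f hdisc S) : Set V) = (γ : Set V) :=
            congrArg Subtype.val hS'
          rw [h1, show tot y.1 = (γ : Set V) from tot_mk1 _]
          exact h2
        · exact (sec_tot_face f S _ hσ1).1


end Ctx
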